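/- For all n ≥ k ≥ 0, u_r(n, n-k) = Σ_{i=0}^{k} Σ_{j=-i}^{i} (-1)^{k+j} · C(n-i, k-i) · s(n, n-i+j) · s(n, n-i-j) · r^{k-i}, where s(n,m) are the (signed) Stirling numbers of the first kind. -/

import Mathlib

/-- `centralu r n k` is the r-central factorial number with even indices of the first kind. -/
def centralu (r : ℕ) : ℕ → ℕ → ℤ
  | 0, 0 => 1
  | 0, _ + 1 => 0
  | n + 1, 0 => (-1) ^ (n + 1) * ∏ i ∈ Finset.range (n + 1), ((i : ℤ) ^ 2 + r)
  | n + 1, k + 1 => centralu r n k - ((n : ℤ) ^ 2 + r) * centralu r n (k + 1)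

/-- Signed Stirling numbers of the first kind:
`∑ m, stirlingFirst n m * x ^ m = x * (x - 1) * ⋯ * (x - n + 1)`. -/
def stirlingFirst : ℕ → ℕ → ℤ
  | 0, 0 => 1
  | 0, _ + 1 => 0
  | _ + 1, 0 => 0
  | n + 1, k + 1 => stirlingFirst n k - (n : ℤ) * stirlingFirst n (k + 1)

/-- Extension of the signed Stirling numbers of the first kind to integer second index,
vanishing for negative indices. -/
def stirlingFirstZ (n : ℕ) (m : ℤ) : ℤ :=
  if 0 ≤ m then stirlingFirst n m.toNat else 0

open Polynomial Finset

noncomputable def Sp (n : ℕ) : Polynomial ℤ := ∏ i ∈ range n, (X - C (i:ℤ))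
noncomputable def Tp (n : ℕ) : Polynomial ℤ := ∏ i ∈ range n, (X + C (i:ℤ))
noncomputable def Qp (r n : ℕ) : Polynomial ℤ := ∏ i ∈ range n, (X - C ((i:ℤ)^2 + r))

lemma coeff_mul_linear_succ (p : Polynomial ℤ) (c : ℤ) (k : ℕ) :
    (p * (X - C c)).coeff (k+1) = p.coeff k - c * p.coeff (k+1) := by
  rw [mul_sub, coeff_sub, coeff_mul_X, coeff_mul_C, mul_comm]

lemma coeff_mul_linear_succ' (p : Polynomial ℤ) (c : ℤ) (k : ℕ) :
    (p * (X + C c)).coeff (k+1) = p.coeff k + c * p.coeff (k+1) := by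
  rw [mul_add, coeff_add, coeff_mul_X, coeff_mul_C, mul_comm]

lemma Sp_coeff (n m : ℕ) : (Sp n).coeff m = stirlingFirst n m := by
  induction n generalizing m with
  | zero =>
    cases m with
    | zero => simp [Sp, stirlingFirst]
    | succ m => simp [Sp, stirlingFirst, coeff_one]
  | succ n ih =>
    have hSp : Sp (n+1) = Sp n * (X - C (n:ℤ)) := by
      rw [Sp, Sp, prod_range_succ]
    cases m with
    | zero =>
      rw [hSp, mul_coeff_zero]
      have h0 : stirlingFirst (n+1) 0 = 0 := rfl
      rw [h0, ih]
      simp only [coeff_sub, coeff_X_zero, coeff_C, if_pos rfl, zero_sub, mul_neg]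
      cases n with
      | zero => simp
      | succ n => simp [show stirlingFirst (n+1) 0 = 0 from rfl]
    | succ m =>
      rw [hSp, coeff_mul_linear_succ, ih, ih]
      rfl

lemma Tp_coeff (n m : ℕ) : (Tp n).coeff m = (-1)^(n+m) * stirlingFirst n m := by
  induction n generalizing m with
  | zero =>
    cases m with
    | zero => simp [Tp, stirlingFirst]
    | succ m => simp [Tp, stirlingFirst, coeff_one]
  | succ n ih =>
    have hTp : Tp (n+1) = Tp n * (X + C (n:ℤ)) := by
      rw [Tp, Tp, prod_range_succ]
    cases m with
    | zero =>
      rw [hTp, mul_coeff_zero, ih]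
      have h0 : stirlingFirst (n+1) 0 = 0 := rfl
      rw [h0]
      simp only [coeff_add, coeff_X_zero, coeff_C, if_pos rfl, zero_add, mul_zero]
      cases n with
      | zero => simp
      | succ n => simp [show stirlingFirst (n+1) 0 = 0 from rfl]
    | succ m =>
      rw [hTp, coeff_mul_linear_succ', ih, ih]
      have h1 : stirlingFirst (n+1) (m+1) = stirlingFirst n m - (n:ℤ) * stirlingFirst n (m+1) := rfl
      rw [h1]
      have : (-1:ℤ)^(n+1+(m+1)) = (-1)^(n+m) := by
        rw [show n+1+(m+1) = (n+m)+2 by ring, pow_add]; ring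
      rw [this, show n+(m+1) = (n+m)+1 by ring, pow_succ]
      ring

lemma Qp_coeff_zero (r n : ℕ) : (Qp r n).coeff 0 = (-1)^n * ∏ i ∈ range n, ((i:ℤ)^2 + r) := by
  rw [coeff_zero_eq_eval_zero, Qp, eval_prod]
  simp only [eval_sub, eval_X, eval_C, zero_sub]
  rw [show (∏ i ∈ range n, (-((i:ℤ)^2+(r:ℤ)))) = ∏ i ∈ range n, ((-1:ℤ) * ((i:ℤ)^2+r)) from
      prod_congr rfl (fun i _ => by ring),
    prod_mul_distrib, prod_const, card_range]

lemma Qp_coeff (r n k : ℕ) : (Qp r n).coeff k = centralu r n k := by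
  induction n generalizing k with
  | zero =>
    cases k with
    | zero => simp [Qp, centralu]
    | succ k => simp [Qp, centralu, coeff_one]
  | succ n ih =>
    have hQp : Qp r (n+1) = Qp r n * (X - C ((n:ℤ)^2 + r)) := by
      rw [Qp, Qp, prod_range_succ]
    cases k with
    | zero =>
      rw [Qp_coeff_zero]
      show _ = centralu r (n+1) 0
      rfl
    | succ k =>
      rw [hQp, coeff_mul_linear_succ, ih, ih]
      rfl

lemma stirlingFirst_eq_zero {n m : ℕ} (h : n < m) : stirlingFirst n m = 0 := by
  induction n generalizing m with
  | zero => cases m with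
    | zero => omega
    | succ m => rfl
  | succ n ih =>
    cases m with
    | zero => omega
    | succ m =>
      show stirlingFirst n m - (n:ℤ) * stirlingFirst n (m+1) = 0
      rw [ih (by omega), ih (by omega)]; ring

lemma stirlingFirstZ_eq_zero_of_lt {n : ℕ} {m : ℤ} (h : (n:ℤ) < m) : stirlingFirstZ n m = 0 := by
  rw [stirlingFirstZ, if_pos (by omega)]
  exact stirlingFirst_eq_zero (by omega)

lemma stirlingFirstZ_eq_zero_of_neg {n : ℕ} {m : ℤ} (h : m < 0) : stirlingFirstZ n m = 0 := by
  rw [stirlingFirstZ, if_neg (by omega)]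

lemma Qp_natDegree_le (r n : ℕ) : (Qp r n).natDegree ≤ n := by
  refine le_trans (natDegree_prod_le _ _) ?_
  apply le_trans (Finset.sum_le_card_nsmul _ _ 1 ?_)
  · simp
  · intro i _; exact le_of_eq (natDegree_X_sub_C _)

lemma coeff_comp_X_add_C (p : Polynomial ℤ) (c : ℤ) (N k : ℕ) (hdeg : p.natDegree ≤ N) :
    (p.comp (X + C c)).coeff k =
      ∑ m ∈ range (N+1), p.coeff m * (c^(m-k) * (m.choose k : ℤ)) := by
  rw [comp_eq_sum_left, coeff_sum, Polynomial.sum_def]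
  rw [Finset.sum_subset (h := fun m hm =>
    (p.supp_subset_range (Nat.lt_succ_of_le hdeg)) hm)]
  · exact Finset.sum_congr rfl fun m _ => by rw [coeff_C_mul, coeff_X_add_C_pow]
  · intro m _ hm
    rw [notMem_support_iff.1 hm, map_zero, zero_mul, coeff_zero]

lemma coeff_comp_X_sq (p : Polynomial ℤ) (m : ℕ) :
    (p.comp (X^2)).coeff (2*m) = p.coeff m := by
  rw [comp_eq_sum_left, coeff_sum, Polynomial.sum_def]
  have h1 : ∀ e ∈ p.support, (C (p.coeff e) * (X^2)^e).coeff (2*m)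
      = if e = m then p.coeff e else 0 := by
    intro e _
    rw [coeff_C_mul, ← pow_mul, coeff_X_pow]
    by_cases h : e = m
    · simp [h]
    · rw [if_neg (by omega), if_neg h, mul_zero]
  rw [Finset.sum_congr rfl h1, Finset.sum_ite_eq' p.support m p.coeff]
  by_cases h : m ∈ p.support
  · rw [if_pos h]
  · rw [if_neg h, (notMem_support_iff.1 h)]

lemma Qp_eq_comp (r n : ℕ) : Qp r n = (Qp 0 n).comp (X - C (r:ℤ)) := by
  rw [Qp, Qp, Polynomial.prod_comp]
  refine prod_congr rfl fun i _ => ?_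
  simp only [sub_comp, X_comp, C_comp, map_add, Nat.cast_zero, add_zero]
  ring

lemma Qp0_comp (n : ℕ) : (Qp 0 n).comp (X^2) = Sp n * Tp n := by
  rw [Qp, Polynomial.prod_comp, Sp, Tp, ← prod_mul_distrib]
  refine prod_congr rfl fun i _ => ?_
  rw [sub_comp, X_comp, C_comp,
    show ((i:ℤ)^2 + ((0:ℕ):ℤ)) = (i:ℤ)^2 by push_cast; ring, map_pow]
  ring

lemma neg_one_pow_eq_of_even {p q : ℕ} (h : Even (p+q)) : (-1:ℤ)^p = (-1)^q := by
  have h2 : (-1:ℤ)^(p+q) = 1 := Even.neg_one_pow h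
  have h3 : (-1:ℤ)^q * (-1)^q = 1 := by
    rw [← pow_add]; exact Even.neg_one_pow ⟨q, rfl⟩
  calc (-1:ℤ)^p = (-1)^p * ((-1)^q * (-1)^q) := by rw [h3, mul_one]
    _ = ((-1)^p * (-1)^q) * (-1)^q := by ring
    _ = (-1)^(p+q) * (-1)^q := by rw [pow_add]
    _ = (-1)^q := by rw [h2, one_mul]

lemma sZ_coe (n a : ℕ) : stirlingFirstZ n (a:ℤ) = stirlingFirst n a := by
  rw [stirlingFirstZ, if_pos (Int.natCast_nonneg a), Int.toNat_natCast]

lemma key (n i : ℕ) (hi : i ≤ n) :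
    (Qp 0 n).coeff (n-i) =
      ∑ j ∈ Icc (-((n-i:ℕ):ℤ)) ((n-i:ℕ):ℤ),
        (-1:ℤ)^((i:ℤ)+j).toNat * stirlingFirstZ n ((n:ℤ)-i+j) *
          stirlingFirstZ n ((n:ℤ)-i-j) := by
  rw [← coeff_comp_X_sq (Qp 0 n) (n-i), Qp0_comp, coeff_mul]
  refine Finset.sum_nbij' (i := fun p => (p.1 : ℤ) - ((n-i:ℕ):ℤ))
    (j := fun z => ((((n-i:ℕ):ℤ) + z).toNat, (((n-i:ℕ):ℤ) - z).toNat)) ?_ ?_ ?_ ?_ ?_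
  · intro p hp
    rw [Finset.HasAntidiagonal.mem_antidiagonal] at hp
    rw [Finset.mem_Icc]
    omega
  · intro z hz
    rw [Finset.mem_Icc] at hz
    rw [Finset.HasAntidiagonal.mem_antidiagonal]
    dsimp only
    omega
  · intro p hp
    rw [Finset.HasAntidiagonal.mem_antidiagonal] at hp
    obtain ⟨a, b⟩ := p
    dsimp only at hp ⊢
    rw [Prod.mk.injEq]
    constructor <;> omega
  · intro z hz
    rw [Finset.mem_Icc] at hz
    dsimp only
    omega
  · intro p hp
    rw [Finset.HasAntidiagonal.mem_antidiagonal] at hp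
    obtain ⟨a, b⟩ := p
    simp only at hp ⊢
    have e1 : (n:ℤ)-i+((a:ℤ) - ((n-i:ℕ):ℤ)) = (a:ℤ) := by push_cast; omega
    have e2 : (n:ℤ)-i-((a:ℤ) - ((n-i:ℕ):ℤ)) = (b:ℤ) := by push_cast; omega
    rw [Sp_coeff, Tp_coeff, e1, e2, sZ_coe, sZ_coe]
    by_cases ha : a ≤ n
    · by_cases hb : b ≤ n
      · set t := ((i:ℤ) + ((a:ℤ) - ((n-i:ℕ):ℤ))).toNat with ht
        have htv : (t:ℤ) = (i:ℤ) + (a:ℤ) - ((n-i:ℕ):ℤ) := by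
          rw [ht]; push_cast; omega
        have heven : Even (n + b + t) := by
          rw [← Int.even_coe_nat]
          refine ⟨(n:ℤ), ?_⟩
          push_cast [htv]
          push_cast at htv
          omega
        have := neg_one_pow_eq_of_even (p := n + b) (q := t)
          (by rw [show n + b + t = (n+b)+t by ring] at heven; exact heven)
        rw [this]; ring
      · rw [stirlingFirst_eq_zero (show n < b by omega)]; ring
    · rw [stirlingFirst_eq_zero (show n < a by omega)]; ring

lemma term_vanish (n i : ℕ) (hi : i ≤ n) (j : ℤ) (hj : j < -(i:ℤ) ∨ (i:ℤ) < j) :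
    stirlingFirstZ n ((n:ℤ)-i+j) * stirlingFirstZ n ((n:ℤ)-i-j) = 0 := by
  rcases hj with hj | hj
  · rw [stirlingFirstZ_eq_zero_of_lt (m := (n:ℤ)-i-j) (by omega), mul_zero]
  · rw [stirlingFirstZ_eq_zero_of_lt (m := (n:ℤ)-i+j) (by omega), zero_mul]

lemma sum_Icc_ext (F : ℤ → ℤ) (A B : ℕ) (hAB : A ≤ B)
    (h : ∀ j : ℤ, (j < -(A:ℤ) ∨ (A:ℤ) < j) → F j = 0) :
    ∑ j ∈ Icc (-(B:ℤ)) B, F j = ∑ j ∈ Icc (-(A:ℤ)) A, F j := by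
  refine (Finset.sum_subset (Finset.Icc_subset_Icc (by omega) (by omega)) ?_).symm
  intro x hx hx'
  rw [Finset.mem_Icc] at hx hx'
  exact h x (by omega)

lemma term_vanish' (n i : ℕ) (hi : i ≤ n) (j : ℤ)
    (hj : j < -(((n-i:ℕ)):ℤ) ∨ (((n-i:ℕ)):ℤ) < j) :
    stirlingFirstZ n ((n:ℤ)-i+j) * stirlingFirstZ n ((n:ℤ)-i-j) = 0 := by
  rcases hj with hj | hj
  · rw [stirlingFirstZ_eq_zero_of_neg (m := (n:ℤ)-i+j) (by omega), zero_mul]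
  · rw [stirlingFirstZ_eq_zero_of_neg (m := (n:ℤ)-i-j) (by omega), mul_zero]

theorem centralu_eq_stirling_sum (r n k : ℕ) (h : k ≤ n) :
    centralu r n (n - k) =
      ∑ i ∈ Finset.range (k + 1),
        ∑ j ∈ Finset.Icc (-(i : ℤ)) (i : ℤ),
          (-1 : ℤ) ^ ((k : ℤ) + j).toNat * ((n - i).choose (k - i) : ℤ) *
            stirlingFirstZ n ((n : ℤ) - i + j) * stirlingFirstZ n ((n : ℤ) - i - j) *
            (r : ℤ) ^ (k - i) := by
  rw [← Qp_coeff, Qp_eq_comp, sub_eq_add_neg, ← C_neg,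
    coeff_comp_X_add_C _ _ n _ (Qp_natDegree_le 0 n), ← Finset.sum_range_reflect]
  simp only [Nat.add_sub_cancel]
  rw [← Finset.sum_subset (Finset.range_subset_range.2 (show k+1 ≤ n+1 by omega)) ?vanish]
  case vanish =>
    intro x hx hx'
    rw [Finset.mem_range] at hx hx'
    rw [Nat.choose_eq_zero_of_lt (by omega : n - x < n - k)]
    push_cast
    ring
  apply Finset.sum_congr rfl
  intro i hi
  rw [Finset.mem_range] at hi
  have hik : i ≤ k := by omega
  have hin : i ≤ n := by omega
  rw [key n i hin]
  set G : ℤ → ℤ := fun j => (-1:ℤ)^((i:ℤ)+j).toNat * stirlingFirstZ n ((n:ℤ)-i+j) *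
    stirlingFirstZ n ((n:ℤ)-i-j) with hG
  have e1 : ∑ j ∈ Icc (-((n-i:ℕ):ℤ)) ((n-i:ℕ):ℤ), G j = ∑ j ∈ Icc (-(i:ℤ)) (i:ℤ), G j := by
    rw [← sum_Icc_ext G (n-i) n (by omega) (fun j hj => by
        rw [hG]; dsimp only; rw [mul_assoc, term_vanish' n i hin j hj]; ring),
      sum_Icc_ext G i n hin (fun j hj => by
        rw [hG]; dsimp only; rw [mul_assoc, term_vanish n i hin j hj]; ring)]
  rw [e1, Finset.sum_mul]
  apply Finset.sum_congr rfl
  intro j hj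
  rw [Finset.mem_Icc] at hj
  have ec : (n-i)-(n-k) = k-i := by omega
  have echoose : (n-i).choose (n-k) = (n-i).choose (k-i) := by
    rw [← Nat.choose_symm (by omega : k-i ≤ n-i)]
    congr 1
    omega
  have et : ((k:ℤ)+j).toNat = (k-i) + ((i:ℤ)+j).toNat := by omega
  rw [hG]
  dsimp only
  rw [ec, echoose, et, pow_add, neg_pow]
  ring
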